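/- Let p ≥ 5 be a prime with p ≡ 1 mod 4 and δ an integer not divisible by p. Then the number of x with 1 ≤ x ≤ (p-1)/2 such that p divides δ²x²+4 is exactly 1, the number with (δ²x²+4/p) = +1 is (p-5)/4, and the number with (δ²x²+4/p) = -1 is (p-1)/4. -/

import Mathlib

open Finset in
lemma count_aux (p : ℕ) [Fact p.Prime] (hp5 : 5 ≤ p) (u : ZMod p) (hu : u ≠ 0)
    (Q : ZMod p → Prop) [DecidablePred Q] :
    ((Finset.Icc 1 ((p - 1) / 2)).filter fun x : ℕ => Q (u ^ 2 * (x : ZMod p) ^ 2)).card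
      = (Finset.univ.filter fun y : ZMod p => y ≠ 0 ∧ IsSquare y ∧ Q y).card := by
  have hp : p.Prime := Fact.out
  have hodd : p % 2 = 1 := by
    obtain ⟨k, hk⟩ := hp.odd_of_ne_two (by omega)
    omega
  refine Finset.card_bij (fun (x : ℕ) _ => u ^ 2 * (x : ZMod p) ^ 2) ?_ ?_ ?_
  · intro x hx
    simp only [Finset.mem_filter, Finset.mem_Icc] at hx ⊢
    obtain ⟨⟨hx1, hx2⟩, hQ⟩ := hx
    have hxp : (x : ZMod p) ≠ 0 := by
      rw [Ne, ZMod.natCast_eq_zero_iff]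
      intro h
      have := Nat.le_of_dvd (by omega) h
      omega
    exact ⟨Finset.mem_univ _,
      mul_ne_zero (pow_ne_zero _ hu) (pow_ne_zero _ hxp), ⟨u * x, by ring⟩, hQ⟩
  · intro x₁ h₁ x₂ h₂ heq
    simp only [Finset.mem_filter, Finset.mem_Icc] at h₁ h₂
    have h2 : ((x₁ : ZMod p)) ^ 2 = ((x₂ : ZMod p)) ^ 2 :=
      mul_left_cancel₀ (pow_ne_zero 2 hu) heq
    have h3 : ((((x₁ : ℤ)) ^ 2 - ((x₂ : ℤ)) ^ 2 : ℤ) : ZMod p) = 0 := by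
      push_cast
      rw [h2]; ring
    rw [ZMod.intCast_zmod_eq_zero_iff_dvd] at h3
    have h4 : ((x₁ : ℤ)) ^ 2 - ((x₂ : ℤ)) ^ 2 = ((x₁ : ℤ) - x₂) * ((x₁ : ℤ) + x₂) := by ring
    rw [h4] at h3
    have hpp : Prime (p : ℤ) := Nat.prime_iff_prime_int.mp hp
    have hb₁ : 1 ≤ x₁ ∧ 2 * x₁ ≤ p - 1 := ⟨h₁.1.1, by omega⟩
    have hb₂ : 1 ≤ x₂ ∧ 2 * x₂ ≤ p - 1 := ⟨h₂.1.1, by omega⟩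
    rcases hpp.dvd_mul.mp h3 with h | h
    · have := Int.eq_zero_of_abs_lt_dvd h (by
        rw [abs_sub_lt_iff]
        constructor <;> [skip; skip] <;>
        · have := hb₁; have := hb₂; push_cast; omega)
      omega
    · have hpos : 0 < (x₁ : ℤ) + x₂ := by have := hb₁; have := hb₂; push_cast; omega
      have hle := Int.le_of_dvd hpos h
      have := hb₁; have := hb₂
      omega
  · intro y hy
    simp only [Finset.mem_filter, Finset.mem_univ, true_and] at hy
    obtain ⟨hy0, ⟨z, hz⟩, hQ⟩ := hy
    have hz0 : z ≠ 0 := by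
      rintro rfl
      exact hy0 (by rw [hz, mul_zero])
    set w := z * u⁻¹ with hw
    have hw0 : w ≠ 0 := mul_ne_zero hz0 (inv_ne_zero hu)
    have hv0 : w.val ≠ 0 := fun h => hw0 ((ZMod.val_eq_zero w).mp h)
    have hvlt : w.val < p := ZMod.val_lt w
    have hwsq : u ^ 2 * w ^ 2 = y := by
      rw [hw, hz]
      field_simp
    have hkey : ∃ x : ℕ, (1 ≤ x ∧ x ≤ (p - 1) / 2) ∧ (x : ZMod p) ^ 2 = w ^ 2 := by
      by_cases hc : w.val ≤ (p - 1) / 2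
      · exact ⟨w.val, ⟨by omega, hc⟩, by rw [ZMod.natCast_zmod_val]⟩
      · refine ⟨p - w.val, ⟨by omega, by omega⟩, ?_⟩
        have : ((p - w.val : ℕ) : ZMod p) = -w := by
          push_cast [Nat.cast_sub hvlt.le]
          rw [ZMod.natCast_self, ZMod.natCast_zmod_val]
          ring
        rw [this]
        ring
    obtain ⟨x, hx, hxw⟩ := hkey
    refine ⟨x, Finset.mem_filter.mpr ⟨Finset.mem_Icc.mpr hx, ?_⟩, ?_⟩
    · show Q (u ^ 2 * (x : ZMod p) ^ 2)
      rw [hxw, hwsq]; exact hQ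
    · show u ^ 2 * (x : ZMod p) ^ 2 = y
      rw [hxw, hwsq]

open Finset in
lemma sum_aux (p : ℕ) [Fact p.Prime] (hp5 : 5 ≤ p) :
    ∑ y ∈ Finset.univ.erase (0 : ZMod p),
      (1 + quadraticChar (ZMod p) y) * quadraticChar (ZMod p) (y + 4) = -2 := by
  set χ := quadraticChar (ZMod p) with hχ
  have hchar : ringChar (ZMod p) ≠ 2 := by
    rw [ZMod.ringChar_zmod_n]; omega
  have h2 : (2 : ZMod p) ≠ 0 := by
    have : ((2 : ℕ) : ZMod p) ≠ 0 := by
      rw [Ne, ZMod.natCast_eq_zero_iff]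
      intro h
      have := Nat.le_of_dvd (by omega) h
      omega
    simpa using this
  have h4 : (4 : ZMod p) ≠ 0 := by
    intro h
    apply h2
    have : (4 : ZMod p) = 2 * 2 := by norm_num
    rw [this] at h
    rcases mul_eq_zero.mp h with h | h <;> exact h
  have hχ4 : χ 4 = 1 := by
    have : (4 : ZMod p) = 2 ^ 2 := by norm_num
    rw [this]
    exact quadraticChar_sq_one' h2
  have E0 : ∑ y : ZMod p, χ (y + 4) = 0 := by
    have h := Equiv.sum_comp (Equiv.addRight (4 : ZMod p)) (fun z => χ z)
    simp only [Equiv.coe_addRight] at h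
    rw [h]
    exact quadraticChar_sum_zero hchar
  have E1 : ∑ y ∈ Finset.univ.erase (0 : ZMod p), χ (y + 4) = -1 := by
    have h := Finset.sum_erase_add Finset.univ (fun y => χ (y + 4)) (Finset.mem_univ (0 : ZMod p))
    rw [E0] at h
    simp only [zero_add, hχ4] at h
    linarith
  have E2 : ∑ y ∈ Finset.univ.erase (0 : ZMod p), χ y * χ (y + 4) = -1 := by
    have step1 : ∑ y ∈ Finset.univ.erase (0 : ZMod p), χ y * χ (y + 4)
        = ∑ y ∈ Finset.univ.erase (0 : ZMod p), χ (1 + 4 * y⁻¹) := by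
      refine Finset.sum_congr rfl fun y hy => ?_
      have hy0 : y ≠ 0 := (Finset.mem_erase.mp hy).1
      have hyy : y * (y + 4) = y ^ 2 * (1 + 4 * y⁻¹) := by
        field_simp
      rw [← map_mul, hyy, map_mul, quadraticChar_sq_one' hy0, one_mul]
    have step2 : ∑ y ∈ Finset.univ.erase (0 : ZMod p), χ (1 + 4 * y⁻¹)
        = ∑ t ∈ Finset.univ.erase (1 : ZMod p), χ t := by
      refine Finset.sum_bij (fun y _ => 1 + 4 * y⁻¹) ?_ ?_ ?_ ?_
      · intro y hy
        have hy0 : y ≠ 0 := (Finset.mem_erase.mp hy).1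
        refine Finset.mem_erase.mpr ⟨?_, Finset.mem_univ _⟩
        intro h
        have : (4 : ZMod p) * y⁻¹ = 0 := by linear_combination h
        rcases mul_eq_zero.mp this with h' | h'
        · exact h4 h'
        · exact hy0 (inv_eq_zero.mp h')
      · intro y₁ hy₁ y₂ hy₂ h
        have : (4 : ZMod p) * y₁⁻¹ = 4 * y₂⁻¹ := by linear_combination h
        have := mul_left_cancel₀ h4 this
        exact inv_injective this
      · intro t ht
        have ht1 : t ≠ 1 := (Finset.mem_erase.mp ht).1
        have htm : t - 1 ≠ 0 := sub_ne_zero.mpr ht1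
        refine ⟨4 * (t - 1)⁻¹, Finset.mem_erase.mpr
          ⟨mul_ne_zero h4 (inv_ne_zero htm), Finset.mem_univ _⟩, ?_⟩
        field_simp
        ring
      · intro y hy; rfl
    have step3 : ∑ t ∈ Finset.univ.erase (1 : ZMod p), χ t = -1 := by
      have h := Finset.sum_erase_add Finset.univ (fun t => χ t) (Finset.mem_univ (1 : ZMod p))
      rw [quadraticChar_sum_zero hchar] at h
      simp only [map_one] at h
      linarith
    rw [step1, step2, step3]
  calc ∑ y ∈ Finset.univ.erase (0 : ZMod p), (1 + χ y) * χ (y + 4)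
      = ∑ y ∈ Finset.univ.erase (0 : ZMod p), (χ (y + 4) + χ y * χ (y + 4)) := by
        refine Finset.sum_congr rfl fun y _ => by ring
    _ = -2 := by rw [Finset.sum_add_distrib, E1, E2]; norm_num

open Finset in
theorem stmt_5 (p : ℕ) (hp : p.Prime) (hp5 : 5 ≤ p) (hp1 : p % 4 = 1)
    (δ : ℤ) (hδ : ¬ (p : ℤ) ∣ δ) :
    ((Finset.Icc 1 ((p - 1) / 2)).filter
        fun x : ℕ => (p : ℤ) ∣ δ ^ 2 * (x : ℤ) ^ 2 + 4).card = 1 ∧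
    ((Finset.Icc 1 ((p - 1) / 2)).filter
        fun x : ℕ => @legendreSym p ⟨hp⟩ (δ ^ 2 * (x : ℤ) ^ 2 + 4) = 1).card = (p - 5) / 4 ∧
    ((Finset.Icc 1 ((p - 1) / 2)).filter
        fun x : ℕ => @legendreSym p ⟨hp⟩ (δ ^ 2 * (x : ℤ) ^ 2 + 4) = -1).card = (p - 1) / 4 := by
  haveI : Fact p.Prime := ⟨hp⟩
  set χ := quadraticChar (ZMod p) with hχdef
  set u : ZMod p := (δ : ZMod p) with hu_def
  have hu : u ≠ 0 := by rwa [hu_def, Ne, ZMod.intCast_zmod_eq_zero_iff_dvd]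
  have hcast : ∀ x : ℕ, ((δ ^ 2 * (x : ℤ) ^ 2 + 4 : ℤ) : ZMod p)
      = u ^ 2 * (x : ZMod p) ^ 2 + 4 := by
    intro x
    rw [hu_def]
    push_cast
    ring
  have hleg : ∀ a : ℤ, @legendreSym p ⟨hp⟩ a = χ ((a : ZMod p)) := fun a => rfl
  have h4 : (4 : ZMod p) ≠ 0 := by
    have h : ((4 : ℕ) : ZMod p) ≠ 0 := by
      rw [Ne, ZMod.natCast_eq_zero_iff]
      intro h
      have := Nat.le_of_dvd (by omega) h
      omega
    simpa using h
  have hm4ne : (-4 : ZMod p) ≠ 0 := neg_ne_zero.mpr h4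
  have hm4sq : IsSquare (-4 : ZMod p) := by
    obtain ⟨i, hi⟩ := ZMod.exists_sq_eq_neg_one_iff.mpr (by omega : p % 4 ≠ 3)
    exact ⟨2 * i, by linear_combination (4 : ZMod p) * hi⟩
  -- counts over the square set
  have hc0 := count_aux p hp5 u hu (fun y => y + 4 = 0)
  have hc1 := count_aux p hp5 u hu (fun y => χ (y + 4) = 1)
  have hc2 := count_aux p hp5 u hu (fun y => χ (y + 4) = -1)
  have hcT := count_aux p hp5 u hu (fun _ => True)
  -- filter conversions
  have hfilt0 : ((Finset.Icc 1 ((p - 1) / 2)).filter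
        fun x : ℕ => (p : ℤ) ∣ δ ^ 2 * (x : ℤ) ^ 2 + 4)
      = (Finset.Icc 1 ((p - 1) / 2)).filter
        fun x : ℕ => u ^ 2 * (x : ZMod p) ^ 2 + 4 = 0 := by
    refine Finset.filter_congr fun x _ => ?_
    rw [← ZMod.intCast_zmod_eq_zero_iff_dvd, hcast x]
  have hfilt1 : ((Finset.Icc 1 ((p - 1) / 2)).filter
        fun x : ℕ => @legendreSym p ⟨hp⟩ (δ ^ 2 * (x : ℤ) ^ 2 + 4) = 1)
      = (Finset.Icc 1 ((p - 1) / 2)).filter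
        fun x : ℕ => χ (u ^ 2 * (x : ZMod p) ^ 2 + 4) = 1 := by
    refine Finset.filter_congr fun x _ => ?_
    rw [hleg, hcast x]
  have hfilt2 : ((Finset.Icc 1 ((p - 1) / 2)).filter
        fun x : ℕ => @legendreSym p ⟨hp⟩ (δ ^ 2 * (x : ℤ) ^ 2 + 4) = -1)
      = (Finset.Icc 1 ((p - 1) / 2)).filter
        fun x : ℕ => χ (u ^ 2 * (x : ZMod p) ^ 2 + 4) = -1 := by
    refine Finset.filter_congr fun x _ => ?_
    rw [hleg, hcast x]
  -- the set A0 is a singleton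
  have hA0 : (Finset.univ.filter fun y : ZMod p => y ≠ 0 ∧ IsSquare y ∧ y + 4 = 0)
      = {(-4 : ZMod p)} := by
    ext y
    simp only [Finset.mem_filter, Finset.mem_univ, true_and, Finset.mem_singleton]
    constructor
    · rintro ⟨-, -, h⟩
      linear_combination h
    · rintro rfl
      exact ⟨hm4ne, hm4sq, by ring⟩
  -- abbreviations
  set Sq : Finset (ZMod p) := Finset.univ.filter (fun y : ZMod p => y ≠ 0 ∧ IsSquare y)
    with hSq_def
  set a : ℕ := (Finset.univ.filter fun y : ZMod p => y ≠ 0 ∧ IsSquare y ∧ χ (y + 4) = 1).card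
    with ha_def
  set b : ℕ := (Finset.univ.filter fun y : ZMod p => y ≠ 0 ∧ IsSquare y ∧ χ (y + 4) = -1).card
    with hb_def
  -- total count
  have hcard_Sq : Sq.card = (p - 1) / 2 := by
    have h1 : ((Finset.Icc 1 ((p - 1) / 2)).filter fun _ : ℕ => True).card = (p - 1) / 2 := by
      rw [Finset.filter_true, Nat.card_Icc]
      omega
    have h2 : (Finset.univ.filter fun y : ZMod p => y ≠ 0 ∧ IsSquare y ∧ True) = Sq := by
      ext y; simp [hSq_def]
    rw [← h2, ← hcT, h1]
  have hSq_parts : Sq.card = 1 + (a + b) := by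
    have hsplit1 := Finset.card_filter_add_card_filter_not
      (s := Sq) (p := fun y => y + 4 = 0)
    have e0 : Sq.filter (fun y => y + 4 = 0)
        = (Finset.univ.filter fun y : ZMod p => y ≠ 0 ∧ IsSquare y ∧ y + 4 = 0) := by
      ext y; simp only [hSq_def, Finset.mem_filter, Finset.mem_univ, true_and]; tauto
    have hsplit2 := Finset.card_filter_add_card_filter_not
      (s := Sq.filter (fun y => ¬(y + 4 = 0))) (p := fun y => χ (y + 4) = 1)
    have e1 : (Sq.filter (fun y => ¬(y + 4 = 0))).filter (fun y => χ (y + 4) = 1)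
        = (Finset.univ.filter fun y : ZMod p => y ≠ 0 ∧ IsSquare y ∧ χ (y + 4) = 1) := by
      ext y
      simp only [hSq_def, Finset.mem_filter, Finset.mem_univ, true_and]
      constructor
      · tauto
      · rintro ⟨h1, h2, h3⟩
        have h0 : ¬ y + 4 = 0 := by
          intro h0
          rw [h0] at h3
          simp [hχdef, quadraticChar_zero] at h3
        tauto
    have e2 : (Sq.filter (fun y => ¬(y + 4 = 0))).filter (fun y => ¬(χ (y + 4) = 1))
        = (Finset.univ.filter fun y : ZMod p => y ≠ 0 ∧ IsSquare y ∧ χ (y + 4) = -1) := by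
      ext y
      simp only [hSq_def, Finset.mem_filter, Finset.mem_univ, true_and]
      constructor
      · rintro ⟨⟨⟨h1, h2⟩, h0⟩, h3⟩
        exact ⟨h1, h2, (quadraticChar_eq_neg_one_iff_not_one h0).mpr h3⟩
      · rintro ⟨h1, h2, h3⟩
        have h0 : y + 4 ≠ 0 := by
          intro h0
          rw [h0] at h3
          simp [hχdef, quadraticChar_zero] at h3
        have h3' : ¬ χ (y + 4) = 1 := by
          rw [h3]
          decide
        tauto
    rw [e0, hA0] at hsplit1
    rw [e1, ← ha_def, e2, ← hb_def] at hsplit2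
    simp only [Finset.card_singleton] at hsplit1
    omega
  -- the character sum over Sq
  have hS : (∑ y ∈ Sq, χ (y + 4)) = (a : ℤ) - b := by
    have hpoint : ∀ y : ZMod p, χ (y + 4)
        = (if χ (y + 4) = 1 then (1 : ℤ) else 0) - (if χ (y + 4) = -1 then (1 : ℤ) else 0) := by
      intro y
      rcases eq_or_ne (y + 4) 0 with h | h
      · rw [h]
        simp [hχdef, quadraticChar_zero]
      · rcases quadraticChar_dichotomy h with h1 | h1 <;> rw [h1] <;> norm_num
    rw [Finset.sum_congr rfl (fun y _ => hpoint y), Finset.sum_sub_distrib,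
      Finset.sum_boole, Finset.sum_boole]
    have e1 : Sq.filter (fun y => χ (y + 4) = 1)
        = (Finset.univ.filter fun y : ZMod p => y ≠ 0 ∧ IsSquare y ∧ χ (y + 4) = 1) := by
      ext y; simp only [hSq_def, Finset.mem_filter, Finset.mem_univ, true_and]; tauto
    have e2 : Sq.filter (fun y => χ (y + 4) = -1)
        = (Finset.univ.filter fun y : ZMod p => y ≠ 0 ∧ IsSquare y ∧ χ (y + 4) = -1) := by
      ext y; simp only [hSq_def, Finset.mem_filter, Finset.mem_univ, true_and]; tauto
    rw [e1, e2, ← ha_def, ← hb_def]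
  have hSval : (∑ y ∈ Sq, χ (y + 4)) = -1 := by
    have hsum := sum_aux p hp5
    have hsplit := Finset.sum_filter_add_sum_filter_not (Finset.univ.erase (0 : ZMod p))
      (fun y => IsSquare y) (fun y => (1 + χ y) * χ (y + 4))
    have e1 : (Finset.univ.erase (0 : ZMod p)).filter (fun y => IsSquare y) = Sq := by
      ext y
      simp only [hSq_def, Finset.mem_filter, Finset.mem_erase, Finset.mem_univ, true_and,
        and_true, and_comm]
    have e2 : ∑ y ∈ (Finset.univ.erase (0 : ZMod p)).filter (fun y => ¬IsSquare y),
        (1 + χ y) * χ (y + 4) = 0 := by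
      refine Finset.sum_eq_zero fun y hy => ?_
      simp only [Finset.mem_filter, Finset.mem_erase, Finset.mem_univ, true_and] at hy
      have : χ y = -1 := quadraticChar_neg_one_iff_not_isSquare.mpr hy.2
      rw [this]
      ring
    have e3 : ∑ y ∈ Sq, (1 + χ y) * χ (y + 4) = 2 * ∑ y ∈ Sq, χ (y + 4) := by
      rw [Finset.mul_sum]
      refine Finset.sum_congr rfl fun y hy => ?_
      simp only [hSq_def, Finset.mem_filter, Finset.mem_univ, true_and] at hy
      have : χ y = 1 := (quadraticChar_one_iff_isSquare hy.1).mpr hy.2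
      rw [this]
      ring
    rw [e1, e2, e3, add_zero] at hsplit
    rw [hsum] at hsplit
    linarith
  -- put everything together
  have hab : (a : ℤ) - b = -1 := by rw [← hS, hSval]
  have htot : (p - 1) / 2 = 1 + (a + b) := by rw [← hcard_Sq, hSq_parts]
  refine ⟨?_, ?_, ?_⟩
  · rw [hfilt0, hc0, hA0, Finset.card_singleton]
  · rw [hfilt1, hc1]
    omega
  · rw [hfilt2, hc2]
    omega
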